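/- For any positive integer n, lcm(1, 2, ..., n) ≥ 2^{n-1}. -/

import Mathlib

lemma aux_dvd_lcm (s : ℕ) : ∀ m : ℕ, 1 ≤ m →
    m * Nat.choose (m + s) s ∣ (Finset.Icc 1 (m + s)).lcm id := by
  induction s with
  | zero =>
    intro m hm
    simp only [Nat.choose_zero_right, mul_one]
    exact Finset.dvd_lcm (f := id) (by simp [hm] : m ∈ Finset.Icc 1 (m + 0))
  | succ s IH =>
    intro m hm
    set L := (Finset.Icc 1 (m + s + 1)).lcm id with hL
    have hsub : Finset.Icc 1 (m + s) ⊆ Finset.Icc 1 (m + s + 1) := by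
      intro x hx; simp only [Finset.mem_Icc] at *; omega
    have hB : m * Nat.choose (m + s) s ∣ L :=
      (IH m hm).trans (Finset.lcm_mono hsub)
    have hsymm1 : Nat.choose (m + s + 1) s = Nat.choose (m + s + 1) (m + 1) := by
      rw [← Nat.choose_symm (by omega : m + 1 ≤ m + s + 1)]
      congr 1; omega
    have hsymm2 : Nat.choose (m + s) s = Nat.choose (m + s) m := by
      rw [← Nat.choose_symm (by omega : m ≤ m + s)]
      congr 1; omega
    have hCeq : (m + 1) * Nat.choose (m + s + 1) s
        = (m + s + 1) * Nat.choose (m + s) s := by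
      rw [hsymm1, hsymm2]
      have := Nat.add_one_mul_choose_eq (m + s) m
      rw [mul_comm]
      exact this.symm
    have hC : (m + s + 1) * Nat.choose (m + s) s ∣ L := by
      rw [← hCeq]
      have := IH (m + 1) (by omega)
      rwa [show m + 1 + s = m + s + 1 from by omega] at this
    have hkey : (s + 1) * Nat.choose (m + s + 1) (s + 1)
        = (m + s + 1) * Nat.choose (m + s) s := by
      have := Nat.add_one_mul_choose_eq (m + s) s
      rw [mul_comm]
      exact this.symm
    set t := Nat.choose (m + s) s with ht
    set A := m * Nat.choose (m + s + 1) (s + 1) with hA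
    have ht0 : 0 < t := Nat.choose_pos (by omega)
    obtain ⟨b, hb⟩ := hB
    obtain ⟨c, hc⟩ := hC
    have hBC : ((m : ℤ) * t) * (((m : ℤ) + s + 1) * t) ≠ 0 := by
      have hm' : (0:ℤ) < m := by exact_mod_cast hm
      have ht' : (0:ℤ) < t := by exact_mod_cast ht0
      positivity
    have hb' : (L : ℤ) = (m : ℤ) * t * b := by exact_mod_cast hb
    have hc' : (L : ℤ) = ((m : ℤ) + s + 1) * t * c := by exact_mod_cast hc
    have hnatZ : ((m : ℤ) * t) * (((m : ℤ) + s + 1) * t)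
        = (A : ℤ) * (((s : ℤ) + 1) * t) := by
      have : ((m : ℤ) * (((s:ℤ) + 1) * (Nat.choose (m + s + 1) (s + 1) : ℤ))) * t
          = ((m:ℤ) * (((m:ℤ) + s + 1) * t)) * t := by
        have h := hkey
        have : (((s:ℤ)) + 1) * (Nat.choose (m + s + 1) (s + 1) : ℤ)
            = ((m:ℤ) + s + 1) * t := by exact_mod_cast congrArg (Nat.cast : ℕ → ℤ) h
        rw [this]
      push_cast [hA]
      linarith [this]
    have key : (L : ℤ) = (A : ℤ) * ((b : ℤ) - c) := by
      apply mul_left_cancel₀ hBC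
      linear_combination (((m:ℤ) + s + 1) * t * A) * hb' - ((m:ℤ) * t * A) * hc'
        + (L : ℤ) * hnatZ
    have : (A : ℤ) ∣ (L : ℤ) := ⟨(b : ℤ) - c, key⟩
    exact_mod_cast this

lemma aux_sum : ∀ n : ℕ, 1 ≤ n →
    ∑ m ∈ Finset.Icc 1 n, m * Nat.choose n m = n * 2 ^ (n - 1) := by
  rintro (_ | k) h
  · omega
  · rw [← Finset.Ico_add_one_right_eq_Icc, Finset.sum_Ico_eq_sum_range]
    have h1 : k + 1 + 1 - 1 = k + 1 := by omega
    rw [h1]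
    have : ∀ j ∈ Finset.range (k + 1),
        (1 + j) * Nat.choose (k + 1) (1 + j) = (k + 1) * Nat.choose k j := by
      intro j hj
      have := Nat.add_one_mul_choose_eq k j
      rw [show 1 + j = j + 1 from by omega, mul_comm ((j:ℕ)+1)]
      omega
    rw [Finset.sum_congr rfl this, ← Finset.mul_sum, Nat.sum_range_choose]
    simp

/-- For any positive integer `n`, `lcm(1, 2, ..., n) ≥ 2^{n-1}`. -/
theorem lcm_ge_two_pow (n : ℕ) (hn : 0 < n) :
    2 ^ (n - 1) ≤ (Finset.Icc 1 n).lcm id := by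
  have hsum := aux_sum n hn
  have hne : (Finset.Icc 1 n).Nonempty := ⟨1, by simp; omega⟩
  have hcard : (Finset.Icc 1 n).card = n := by simp
  have hle : ∑ m ∈ Finset.Icc 1 n, 2 ^ (n - 1)
      ≤ ∑ m ∈ Finset.Icc 1 n, m * Nat.choose n m := by
    rw [Finset.sum_const, hcard, smul_eq_mul, hsum]
  obtain ⟨m, hm, hm2⟩ := Finset.exists_le_of_sum_le hne hle
  simp only [Finset.mem_Icc] at hm
  have hdvd : m * Nat.choose n m ∣ (Finset.Icc 1 n).lcm id := by
    have := aux_dvd_lcm (n - m) m hm.1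
    rw [show m + (n - m) = n from by omega, Nat.choose_symm hm.2] at this
    exact this
  have hpos : 0 < (Finset.Icc 1 n).lcm id := by
    rcases Nat.eq_zero_or_pos ((Finset.Icc 1 n).lcm id) with h | h
    · exfalso
      rw [Finset.lcm_eq_zero_iff] at h
      simp only [Set.mem_image, Finset.mem_coe, Finset.mem_Icc, id] at h
      obtain ⟨x, hx, hx0⟩ := h
      omega
    · exact h
  exact hm2.trans (Nat.le_of_dvd hpos hdvd)
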